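/- Deutsch uncertainty principle for Parseval frames: Let {τ_j}_{j=1}^n and {ω_k}_{k=1}^m be two Parseval frames for a finite-dimensional Hilbert space H with ‖τ_j‖ ≤ 1 and ‖ω_k‖ ≤ 1 for all j, k. Then for every unit vector h with all ⟨h, τ_j⟩ and ⟨h, ω_k⟩ nonzero, S_τ(h) + S_ω(h) ≥ -2 log((1 + max_{j,k} |⟨τ_j, ω_k⟩|)/2), where S_τ(h) = Σ_j |⟨h, τ_j⟩|² log(1/|⟨h, τ_j⟩|²). -/

import Mathlib

open RCLike

/-- Buzano's inequality for a unit vector. -/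
lemma buzano_aux {𝕜 H : Type*} [RCLike 𝕜] [NormedAddCommGroup H] [InnerProductSpace 𝕜 H]
    (h x y : H) (hh : ‖h‖ = 1) :
    ‖(inner 𝕜 h x : 𝕜)‖ * ‖(inner 𝕜 h y : 𝕜)‖ ≤ (‖x‖ * ‖y‖ + ‖(inner 𝕜 x y : 𝕜)‖) / 2 := by
  set a : 𝕜 := inner 𝕜 h x with hadef
  set b : 𝕜 := inner 𝕜 h y with hbdef
  set x' : H := x - a • h with hx'def
  set y' : H := y - b • h with hy'def
  have hhh : (inner 𝕜 h h : 𝕜) = 1 := by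
    rw [inner_self_eq_norm_sq_to_K, hh]; norm_num
  have hx'h : (inner 𝕜 h x' : 𝕜) = 0 := by
    simp [hx'def, inner_sub_right, inner_smul_right, hhh, hh, hadef]
  have hy'h : (inner 𝕜 h y' : 𝕜) = 0 := by
    simp [hy'def, inner_sub_right, inner_smul_right, hhh, hh, hbdef]
  -- norm decomposition
  have hxdec : ‖x‖ ^ 2 = ‖a‖ ^ 2 + ‖x'‖ ^ 2 := by
    have hx : x = a • h + x' := by rw [hx'def]; abel
    have : (inner 𝕜 (a • h) x' : 𝕜) = 0 := by
      rw [inner_smul_left, hx'h, mul_zero]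
    calc ‖x‖ ^ 2 = ‖a • h + x'‖ ^ 2 := by rw [← hx]
      _ = ‖a • h‖ ^ 2 + 2 * re (inner 𝕜 (a • h) x' : 𝕜) + ‖x'‖ ^ 2 := norm_add_sq _ _
      _ = ‖a‖ ^ 2 + ‖x'‖ ^ 2 := by rw [this, norm_smul, hh]; simp
  have hydec : ‖y‖ ^ 2 = ‖b‖ ^ 2 + ‖y'‖ ^ 2 := by
    have hy : y = b • h + y' := by rw [hy'def]; abel
    have : (inner 𝕜 (b • h) y' : 𝕜) = 0 := by
      rw [inner_smul_left, hy'h, mul_zero]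
    calc ‖y‖ ^ 2 = ‖b • h + y'‖ ^ 2 := by rw [← hy]
      _ = ‖b • h‖ ^ 2 + 2 * re (inner 𝕜 (b • h) y' : 𝕜) + ‖y'‖ ^ 2 := norm_add_sq _ _
      _ = ‖b‖ ^ 2 + ‖y'‖ ^ 2 := by rw [this, norm_smul, hh]; simp
  -- inner identity
  have hxh : (inner 𝕜 x h : 𝕜) = starRingEnd 𝕜 a := by
    rw [hadef, ← inner_conj_symm]
  have hinner : (inner 𝕜 x' y' : 𝕜) = inner 𝕜 x y - starRingEnd 𝕜 a * b := by
    rw [hx'def, hy'def]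
    simp only [inner_sub_left, inner_sub_right, inner_smul_left, inner_smul_right, hhh,
      hxh, hbdef]
    ring
  have key1 : ‖a‖ * ‖b‖ ≤ ‖(inner 𝕜 x y : 𝕜)‖ + ‖x'‖ * ‖y'‖ := by
    have h1 : starRingEnd 𝕜 a * b = inner 𝕜 x y - inner 𝕜 x' y' := by
      rw [hinner]; ring
    have h2 : ‖a‖ * ‖b‖ = ‖starRingEnd 𝕜 a * b‖ := by
      rw [norm_mul, RCLike.norm_conj]
    rw [h2, h1]
    calc ‖(inner 𝕜 x y : 𝕜) - inner 𝕜 x' y'‖ ≤ ‖(inner 𝕜 x y : 𝕜)‖ + ‖(inner 𝕜 x' y' : 𝕜)‖ :=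
          norm_sub_le _ _
      _ ≤ ‖(inner 𝕜 x y : 𝕜)‖ + ‖x'‖ * ‖y'‖ := by
          gcongr; exact norm_inner_le_norm _ _
  have key2 : ‖a‖ * ‖b‖ + ‖x'‖ * ‖y'‖ ≤ ‖x‖ * ‖y‖ := by
    have h1 : (‖a‖ * ‖b‖ + ‖x'‖ * ‖y'‖) ^ 2 ≤ (‖x‖ * ‖y‖) ^ 2 := by
      have := sq_nonneg (‖a‖ * ‖y'‖ - ‖b‖ * ‖x'‖)
      nlinarith [hxdec, hydec, norm_nonneg a, norm_nonneg b, norm_nonneg x', norm_nonneg y']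
    have h2 : 0 ≤ ‖x‖ * ‖y‖ := by positivity
    nlinarith [mul_nonneg (mul_nonneg (norm_nonneg a) (norm_nonneg b))
      (mul_nonneg (norm_nonneg x') (norm_nonneg y'))]
  linarith

theorem deutsch_parseval_frames {𝕜 H : Type*} [RCLike 𝕜] [NormedAddCommGroup H]
    [InnerProductSpace 𝕜 H] [FiniteDimensional 𝕜 H]
    {n m : ℕ} (hn : 0 < n) (hm : 0 < m)
    (τ : Fin n → H) (ω : Fin m → H)
    (hτ : ∀ x : H, ‖x‖ ^ 2 = ∑ j, ‖(inner 𝕜 x (τ j) : 𝕜)‖ ^ 2)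
    (hω : ∀ x : H, ‖x‖ ^ 2 = ∑ k, ‖(inner 𝕜 x (ω k) : 𝕜)‖ ^ 2)
    (hτ1 : ∀ j, ‖τ j‖ ≤ 1) (hω1 : ∀ k, ‖ω k‖ ≤ 1)
    (h : H) (hh : ‖h‖ = 1)
    (hhτ : ∀ j, (inner 𝕜 h (τ j) : 𝕜) ≠ 0) (hhω : ∀ k, (inner 𝕜 h (ω k) : 𝕜) ≠ 0) :
    (∑ j, ‖(inner 𝕜 h (τ j) : 𝕜)‖ ^ 2 * Real.log (1 / ‖(inner 𝕜 h (τ j) : 𝕜)‖ ^ 2)) +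
      (∑ k, ‖(inner 𝕜 h (ω k) : 𝕜)‖ ^ 2 * Real.log (1 / ‖(inner 𝕜 h (ω k) : 𝕜)‖ ^ 2)) ≥
      -2 * Real.log ((1 + ⨆ j, ⨆ k, ‖(inner 𝕜 (τ j) (ω k) : 𝕜)‖) / 2) := by
  haveI : Nonempty (Fin n) := ⟨⟨0, hn⟩⟩
  haveI : Nonempty (Fin m) := ⟨⟨0, hm⟩⟩
  set a : Fin n → ℝ := fun j => ‖(inner 𝕜 h (τ j) : 𝕜)‖ ^ 2 with hadef
  set b : Fin m → ℝ := fun k => ‖(inner 𝕜 h (ω k) : 𝕜)‖ ^ 2 with hbdef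
  have ha1 : ∑ j, a j = 1 := by rw [← hτ h, hh]; norm_num
  have hb1 : ∑ k, b k = 1 := by rw [← hω h, hh]; norm_num
  have ha0 : ∀ j, 0 < a j := fun j => pow_pos (norm_pos_iff.mpr (hhτ j)) 2
  have hb0 : ∀ k, 0 < b k := fun k => pow_pos (norm_pos_iff.mpr (hhω k)) 2
  set B := ⨆ j, ⨆ k, ‖(inner 𝕜 (τ j) (ω k) : 𝕜)‖ with hBdef
  have hBle : ∀ j k, ‖(inner 𝕜 (τ j) (ω k) : 𝕜)‖ ≤ B := by
    intro j k
    have h1 : ‖(inner 𝕜 (τ j) (ω k) : 𝕜)‖ ≤ ⨆ k, ‖(inner 𝕜 (τ j) (ω k) : 𝕜)‖ :=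
      le_ciSup (f := fun k => ‖(inner 𝕜 (τ j) (ω k) : 𝕜)‖)
        (Set.Finite.bddAbove (Set.finite_range _)) k
    exact h1.trans (le_ciSup (f := fun j => ⨆ k, ‖(inner 𝕜 (τ j) (ω k) : 𝕜)‖)
        (Set.Finite.bddAbove (Set.finite_range _)) j)
  have hB0 : 0 ≤ B := le_trans (norm_nonneg _) (hBle ⟨0, hn⟩ ⟨0, hm⟩)
  set C : ℝ := (1 + B) / 2 with hCdef
  have hC0 : 0 < C := by positivity
  -- key Buzano bound
  have hkey : ∀ j k, a j * b k ≤ C ^ 2 := by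
    intro j k
    have h1 : ‖(inner 𝕜 h (τ j) : 𝕜)‖ * ‖(inner 𝕜 h (ω k) : 𝕜)‖ ≤ C := by
      calc ‖(inner 𝕜 h (τ j) : 𝕜)‖ * ‖(inner 𝕜 h (ω k) : 𝕜)‖
          ≤ (‖τ j‖ * ‖ω k‖ + ‖(inner 𝕜 (τ j) (ω k) : 𝕜)‖) / 2 := buzano_aux h _ _ hh
        _ ≤ (1 * 1 + B) / 2 := by
            gcongr <;>
              first
              | exact hτ1 j
              | exact hω1 k
              | exact hBle j k
              | positivity
        _ = C := by rw [hCdef]; ring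
    have h2 : a j * b k = (‖(inner 𝕜 h (τ j) : 𝕜)‖ * ‖(inner 𝕜 h (ω k) : 𝕜)‖) ^ 2 := by
      rw [hadef, hbdef]; ring
    rw [h2]
    exact pow_le_pow_left₀ (by positivity) h1 2
  -- entropy bound per term
  have hlog : ∀ j k, -2 * Real.log C ≤ Real.log (1 / (a j * b k)) := by
    intro j k
    have h1 : Real.log (a j * b k) ≤ Real.log (C ^ 2) :=
      Real.log_le_log (mul_pos (ha0 j) (hb0 k)) (hkey j k)
    rw [Real.log_pow] at h1
    rw [one_div, Real.log_inv]
    push_cast at h1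
    linarith
  -- rewrite LHS as double sum
  have hLHS : (∑ j, a j * Real.log (1 / a j)) + (∑ k, b k * Real.log (1 / b k)) =
      ∑ j, ∑ k, a j * b k * Real.log (1 / (a j * b k)) := by
    have e1 : (∑ j, a j * Real.log (1 / a j)) =
        ∑ j, ∑ k, a j * b k * Real.log (1 / a j) := by
      refine Finset.sum_congr rfl fun j _ => ?_
      rw [show (∑ k, a j * b k * Real.log (1 / a j)) =
          (∑ k, b k) * (a j * Real.log (1 / a j)) from by
        rw [Finset.sum_mul]; exact Finset.sum_congr rfl fun k _ => by ring, hb1, one_mul]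
    have e2 : (∑ k, b k * Real.log (1 / b k)) =
        ∑ j, ∑ k, a j * b k * Real.log (1 / b k) := by
      rw [Finset.sum_comm]
      refine Finset.sum_congr rfl fun k _ => ?_
      rw [show (∑ j, a j * b k * Real.log (1 / b k)) =
          (∑ j, a j) * (b k * Real.log (1 / b k)) from by
        rw [Finset.sum_mul]; exact Finset.sum_congr rfl fun j _ => by ring, ha1, one_mul]
    rw [e1, e2, ← Finset.sum_add_distrib]
    refine Finset.sum_congr rfl fun j _ => ?_
    rw [← Finset.sum_add_distrib]
    refine Finset.sum_congr rfl fun k _ => ?_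
    rw [one_div, one_div, one_div, Real.log_inv, Real.log_inv, Real.log_inv,
      Real.log_mul (ha0 j).ne' (hb0 k).ne']
    ring
  rw [ge_iff_le]
  have final : -2 * Real.log C ≤
      (∑ j, a j * Real.log (1 / a j)) + ∑ k, b k * Real.log (1 / b k) := by
    rw [hLHS]
    calc -2 * Real.log C = (∑ j, ∑ k, a j * b k) * (-2 * Real.log C) := by
          have hsum : ∑ j, ∑ k, a j * b k = 1 := by
            have e : ∀ j ∈ Finset.univ, ∑ k, a j * b k = a j := fun j _ => by
              rw [← Finset.mul_sum, hb1, mul_one]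
            rw [Finset.sum_congr rfl e, ha1]
          rw [hsum, one_mul]
      _ = ∑ j, ∑ k, a j * b k * (-2 * Real.log C) := by
          rw [Finset.sum_mul]
          exact Finset.sum_congr rfl fun j _ => by rw [Finset.sum_mul]
      _ ≤ ∑ j, ∑ k, a j * b k * Real.log (1 / (a j * b k)) := by
          refine Finset.sum_le_sum fun j _ => Finset.sum_le_sum fun k _ => ?_
          exact mul_le_mul_of_nonneg_left (hlog j k) (mul_pos (ha0 j) (hb0 k)).le
  exact final
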